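/- Define the dimensionless entropy η(p,T) = -log p + 2 tanh⁻¹(α) + (5/2 + T_i/T)·α + (5/2) log T, where α = α(p,T) = (1 + κ p T^{-5/2} e^{T_i/T})^{-1/2}. Then ∂η/∂p at fixed T equals -((1+α)/p)·(1 + (α/2)(1-α)(5/2 + T_i/T)), which is ≤ -1/p < 0. -/

import Mathlib

/-- Inverse hyperbolic tangent. -/
noncomputable def artanh (x : ℝ) : ℝ := (1 / 2) * Real.log ((1 + x) / (1 - x))

/-- Saha ionization degree. -/
noncomputable def sahaAlpha (κ Ti p T : ℝ) : ℝ :=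
  (1 + κ * p * T ^ (-(5/2) : ℝ) * Real.exp (Ti / T)) ^ (-(1/2) : ℝ)

/-- Dimensionless entropy η(p,T) = -log p + 2 tanh⁻¹ α + (5/2 + T_i/T)α + (5/2) log T. -/
noncomputable def eta (κ Ti p T : ℝ) : ℝ :=
  -Real.log p + 2 * artanh (sahaAlpha κ Ti p T) + (5/2 + Ti / T) * sahaAlpha κ Ti p T
    + (5/2) * Real.log T

lemma hasDerivAt_artanh {x : ℝ} (h1 : -1 < x) (h2 : x < 1) :
    HasDerivAt artanh (1 / (1 - x^2)) x := by
  have hp1 : 0 < 1 + x := by linarith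
  have hm1 : 0 < 1 - x := by linarith
  have hsq : (1:ℝ) - x^2 ≠ 0 := by nlinarith
  have hnum : HasDerivAt (fun y : ℝ => 1 + y) 1 x := by
    exact (hasDerivAt_id x).const_add (1:ℝ)
  have hden : HasDerivAt (fun y : ℝ => 1 - y) (-1) x := by
    exact (hasDerivAt_id x).const_sub (1:ℝ)
  have hg := hnum.div hden (ne_of_gt hm1)
  have hgx : (1 + x) / (1 - x) ≠ 0 := ne_of_gt (div_pos hp1 hm1)
  have h := (hg.log hgx).const_mul (1/2 : ℝ)
  have heq : (1/2 : ℝ) * (((1 * (1 - x) - (1 + x) * (-1)) / (1 - x)^2) / ((1 + x) / (1 - x)))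
      = 1 / (1 - x^2) := by
    field_simp
    ring
  simp only [Pi.div_apply] at h
  rw [heq] at h
  exact h

set_option maxHeartbeats 1600000 in
/-- ∂η/∂p at fixed T equals -((1+α)/p)(1 + (α/2)(1-α)(5/2 + T_i/T)), which is ≤ -1/p < 0. -/
theorem eta_deriv_p (κ Ti p T : ℝ) (hκ : 0 < κ) (hTi : 0 < Ti)
    (hp : 0 < p) (hT : 0 < T) :
    HasDerivAt (fun p' : ℝ => eta κ Ti p' T)
      (-((1 + sahaAlpha κ Ti p T) / p) *
        (1 + (sahaAlpha κ Ti p T / 2) * (1 - sahaAlpha κ Ti p T) * (5/2 + Ti / T))) p ∧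
    -((1 + sahaAlpha κ Ti p T) / p) *
        (1 + (sahaAlpha κ Ti p T / 2) * (1 - sahaAlpha κ Ti p T) * (5/2 + Ti / T)) ≤ -(1 / p) ∧
    -(1 / p) < 0 := by
  set c : ℝ := κ * T ^ (-(5/2) : ℝ) * Real.exp (Ti / T) with hc_def
  have hc : 0 < c := by
    apply mul_pos (mul_pos hκ (Real.rpow_pos_of_pos hT _)) (Real.exp_pos _)
  set A : ℝ := 5/2 + Ti / T with hA_def
  have hA : 0 < A := by positivity
  -- abbreviation for u and α
  have hu0' : ∀ p' : ℝ, 0 < p' → (1:ℝ) < 1 + c * p' := fun p' hp' => by nlinarith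
  set u : ℝ := 1 + c * p with hu_def
  have hu1 : 1 < u := hu0' p hp
  have hu0 : 0 < u := by linarith
  set α : ℝ := u ^ (-(1/2) : ℝ) with hα_def
  have hα0 : 0 < α := Real.rpow_pos_of_pos hu0 _
  have hα1 : α < 1 := by
    have := Real.rpow_lt_one_of_one_lt_of_neg hu1 (by norm_num : (-(1/2):ℝ) < 0)
    simpa [hα_def] using this
  -- key: α² = u⁻¹, i.e. α² * u = 1
  have hα2 : α ^ 2 * u = 1 := by
    rw [hα_def, ← Real.rpow_natCast (u ^ (-(1/2):ℝ)) 2, ← Real.rpow_mul (le_of_lt hu0)]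
    norm_num
    rw [Real.rpow_neg_one]
    exact inv_mul_cancel₀ (ne_of_gt hu0)
  have hα3 : α ^ 3 = u ^ (-(3/2) : ℝ) := by
    rw [hα_def, ← Real.rpow_natCast (u ^ (-(1/2):ℝ)) 3, ← Real.rpow_mul (le_of_lt hu0)]
    norm_num
  -- sahaAlpha equals α at p
  have hsa : sahaAlpha κ Ti p T = α := by
    rw [sahaAlpha, hα_def, hu_def, hc_def]; ring_nf
  -- derivative of inner affine map
  have hlin : HasDerivAt (fun p' : ℝ => 1 + c * p') c p := by
    have := ((hasDerivAt_id p).const_mul c).const_add (1:ℝ)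
    rw [mul_one] at this
    exact this
  -- derivative of α(p')
  have halpha : HasDerivAt (fun p' : ℝ => (1 + c * p') ^ (-(1/2) : ℝ))
      (c * (-(1/2)) * u ^ ((-(1/2):ℝ) - 1)) p := by
    have := hlin.rpow_const (p := (-(1/2):ℝ)) (Or.inl (ne_of_gt hu0))
    simpa [hu_def] using this
  -- derivative of artanh ∘ α
  have hsq : (1:ℝ) - α^2 ≠ 0 := by nlinarith
  have hart : HasDerivAt (fun p' : ℝ => artanh ((1 + c * p') ^ (-(1/2) : ℝ)))
      ((1 / (1 - α^2)) * (c * (-(1/2)) * u ^ ((-(1/2):ℝ) - 1))) p := by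
    have h1 := hasDerivAt_artanh (x := α) (by linarith) hα1
    have := h1.comp p halpha
    simpa [hα_def, hu_def, Function.comp_def] using this
  -- derivative of -log
  have hlog : HasDerivAt (fun p' : ℝ => -Real.log p') (-(p⁻¹)) p :=
    (Real.hasDerivAt_log (ne_of_gt hp)).neg
  -- assemble
  have hF : HasDerivAt (fun p' : ℝ =>
      -Real.log p' + 2 * artanh ((1 + c * p') ^ (-(1/2) : ℝ))
        + A * (1 + c * p') ^ (-(1/2) : ℝ) + (5/2) * Real.log T)
      (-(p⁻¹) + 2 * ((1 / (1 - α^2)) * (c * (-(1/2)) * u ^ ((-(1/2):ℝ) - 1)))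
        + A * (c * (-(1/2)) * u ^ ((-(1/2):ℝ) - 1)) + 0) p := by
    exact ((hlog.add (hart.const_mul 2)).add (halpha.const_mul A)).add
      (hasDerivAt_const p _)
  have hfun : (fun p' : ℝ =>
      -Real.log p' + 2 * artanh ((1 + c * p') ^ (-(1/2) : ℝ))
        + A * (1 + c * p') ^ (-(1/2) : ℝ) + (5/2) * Real.log T)
      = fun p' : ℝ => eta κ Ti p' T := by
    funext p'
    rw [eta, sahaAlpha, hA_def, hc_def]
    ring_nf
  rw [hfun] at hF
  -- rewrite the power term
  have hpow : u ^ ((-(1/2):ℝ) - 1) = α ^ 3 := by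
    rw [hα3]; norm_num
  rw [hpow] at hF
  -- show the derivative value equals the closed form
  have hc_eq : c * p = 1 / α ^ 2 - 1 := by
    have hα2' : α ^ 2 ≠ 0 := by positivity
    field_simp
    nlinarith [hα2]
  have hval : -(p⁻¹) + 2 * ((1 / (1 - α^2)) * (c * (-(1/2)) * α ^ 3))
        + A * (c * (-(1/2)) * α ^ 3) + 0
      = -((1 + α) / p) * (1 + (α / 2) * (1 - α) * A) := by
    have hp' : p ≠ 0 := ne_of_gt hp
    have hα' : α ≠ 0 := ne_of_gt hα0
    have hcp : c = (1 - α^2) / (p * α^2) := by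
      field_simp
      nlinarith [hα2]
    rw [hcp]
    field_simp
    ring
  rw [hval] at hF
  rw [hsa]
  clear_value α u c A
  refine ⟨hF, ?_, ?_⟩
  · -- the inequality
    rw [neg_mul, neg_le_neg_iff]
    have h1 : 1 / p ≤ (1 + α) / p := by
      gcongr
      linarith
    have h2 : (1:ℝ) ≤ 1 + (α / 2) * (1 - α) * A := by
      have := mul_nonneg (mul_nonneg (by linarith : (0:ℝ) ≤ α / 2)
        (by linarith : (0:ℝ) ≤ 1 - α)) hA.le
      linarith
    calc 1 / p ≤ (1 + α) / p := h1
      _ = (1 + α) / p * 1 := by ring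
      _ ≤ (1 + α) / p * (1 + (α / 2) * (1 - α) * A) :=
          mul_le_mul_of_nonneg_left h2 (div_nonneg (by linarith) hp.le)
  · have := one_div_pos.mpr hp
    linarith
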